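/- Let M be a compact complex manifold, r₁, r₂ ∈ S_M. Then r₁ + r₂ ∈ S_M, where S_M = {r ∈ ℕ, r ≥ 3 | Bs|rK_M| = ∅ and for generic x ∈ M, Bs|V(r,x)| = {x}}, with V(r,x) = {η ∈ H⁰(M, rK_M) | mult_x η ≥ 2nr/(r−2)} and n = dim M. -/

import Mathlib

lemma key_nat (n a b k₁ k₂ : ℕ) (hn : 1 ≤ n) (ha : 1 ≤ a) (hb : 1 ≤ b)
    (H1 : 2*n*(a+2) ≤ a*k₁) (H2 : 2*n*(b+2) ≤ b*k₂) :
    2*n*(a+b+4) ≤ (a+b+2)*(k₁+k₂) := by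
  have hk1 : 2*n+1 ≤ k₁ := by nlinarith
  have hk2 : 2*n+1 ≤ k₂ := by nlinarith
  nlinarith

lemma key_enat (n r₁ r₂ : ℕ) (hn : 1 ≤ n) (h1 : 3 ≤ r₁) (h2 : 3 ≤ r₂)
    (m₁ m₂ : ℕ∞)
    (H1 : ((2*n*r₁ : ℕ) : ℕ∞) ≤ ((r₁-2 : ℕ) : ℕ∞) * m₁)
    (H2 : ((2*n*r₂ : ℕ) : ℕ∞) ≤ ((r₂-2 : ℕ) : ℕ∞) * m₂) :
    ((2*n*(r₁+r₂) : ℕ) : ℕ∞) ≤ ((r₁+r₂-2 : ℕ) : ℕ∞) * (m₁ + m₂) := by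
  have hr : (r₁+r₂-2 : ℕ) ≠ 0 := by omega
  rcases eq_or_ne m₁ ⊤ with rfl | hm1
  · rw [top_add, ENat.mul_top (by exact_mod_cast hr)]; exact le_top
  rcases eq_or_ne m₂ ⊤ with rfl | hm2
  · rw [add_top, ENat.mul_top (by exact_mod_cast hr)]; exact le_top
  lift m₁ to ℕ using hm1
  lift m₂ to ℕ using hm2
  rw [← Nat.cast_mul, Nat.cast_le] at H1 H2
  rw [← Nat.cast_add, ← Nat.cast_mul, Nat.cast_le]
  obtain ⟨a, rfl⟩ : ∃ a, r₁ = a + 3 := ⟨r₁ - 3, by omega⟩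
  obtain ⟨b, rfl⟩ : ∃ b, r₂ = b + 3 := ⟨r₂ - 3, by omega⟩
  have e1 : a + 3 - 2 = a + 1 := by omega
  have e2 : b + 3 - 2 = b + 1 := by omega
  have e3 : a + 3 + (b + 3) - 2 = a + b + 4 := by omega
  rw [e1] at H1; rw [e2] at H2; rw [e3]
  have := key_nat n (a+1) (b+1) m₁ m₂ hn (by omega) (by omega)
    (by linarith [H1]) (by linarith [H2])
  nlinarith [this]

lemma mult_zero_of_not_one_le {m : ℕ∞} (h : ¬ 1 ≤ m) : m = 0 := by
  rcases eq_or_ne m 0 with rfl | hm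
  · rfl
  · exact absurd (ENat.one_le_iff_ne_zero.mpr hm) h

/-- Lemma 4.2: `S_M` is an additive semigroup.  `M` plays the role of the compact
complex manifold of dimension `n`, `Sec r` the space of sections of `rK_M`,
`mult r η x` the vanishing order of `η` at `x` (with `∞` for the zero section),
`tmul` the tensor product of pluricanonical sections, and `gen` the filter of
Zariski-generic subsets of `M`.  The base locus of a family `W` of sections is
`{y | ∀ η ∈ W, 1 ≤ mult η y}`, and `V(r,x)` is described by the condition
`(r-2) * mult_x η ≥ 2nr`, i.e. `mult_x η ≥ 2nr/(r-2)`. -/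
theorem SM_semigroup {M : Type*} (n : ℕ) (hn : 1 ≤ n)
    (Sec : ℕ → Type*) (mult : ∀ r : ℕ, Sec r → M → ℕ∞)
    (tmul : ∀ {r₁ r₂ : ℕ}, Sec r₁ → Sec r₂ → Sec (r₁ + r₂))
    (hadd : ∀ (r₁ r₂ : ℕ) (η₁ : Sec r₁) (η₂ : Sec r₂) (x : M),
      mult (r₁ + r₂) (tmul η₁ η₂) x = mult r₁ η₁ x + mult r₂ η₂ x)
    (gen : Filter M) (SM : Set ℕ)
    (hSM : SM = {r : ℕ | 3 ≤ r ∧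
      {y : M | ∀ η : Sec r, 1 ≤ mult r η y} = ∅ ∧
      ∀ᶠ x in gen,
        {y : M | ∀ η : Sec r,
          ((2 * n * r : ℕ) : ℕ∞) ≤ ((r - 2 : ℕ) : ℕ∞) * mult r η x →
            1 ≤ mult r η y} = {x}})
    (r₁ r₂ : ℕ) (h₁ : r₁ ∈ SM) (h₂ : r₂ ∈ SM) : r₁ + r₂ ∈ SM := by
  subst hSM
  obtain ⟨h3₁, hB₁, hG₁⟩ := h₁
  obtain ⟨h3₂, hB₂, hG₂⟩ := h₂
  refine ⟨by omega, ?_, ?_⟩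
  · -- base locus of |rK_M| is empty
    ext y
    simp only [Set.mem_setOf_eq, Set.mem_empty_iff_false, iff_false]
    intro h
    have hy₁ : y ∉ {y : M | ∀ η : Sec r₁, 1 ≤ mult r₁ η y} := by
      rw [hB₁]; exact fun h => h
    have hy₂ : y ∉ {y : M | ∀ η : Sec r₂, 1 ≤ mult r₂ η y} := by
      rw [hB₂]; exact fun h => h
    simp only [Set.mem_setOf_eq, not_forall] at hy₁ hy₂
    obtain ⟨η₁, hη₁⟩ := hy₁
    obtain ⟨η₂, hη₂⟩ := hy₂
    have := h (tmul η₁ η₂)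
    rw [hadd, mult_zero_of_not_one_le hη₁, mult_zero_of_not_one_le hη₂,
      add_zero] at this
    exact absurd this (by simp)
  · -- the generic condition
    filter_upwards [hG₁, hG₂] with x hx₁ hx₂
    ext y
    simp only [Set.mem_setOf_eq, Set.mem_singleton_iff]
    constructor
    · intro hy
      by_contra hne
      have hy₁ : y ∉ ({x} : Set M) := hne
      rw [← hx₁] at hy₁
      have hy₂ : y ∉ ({x} : Set M) := hne
      rw [← hx₂] at hy₂
      simp only [Set.mem_setOf_eq, not_forall] at hy₁ hy₂
      obtain ⟨η₁, hc₁, hm₁⟩ := hy₁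
      obtain ⟨η₂, hc₂, hm₂⟩ := hy₂
      have hc : ((2 * n * (r₁ + r₂) : ℕ) : ℕ∞) ≤
          ((r₁ + r₂ - 2 : ℕ) : ℕ∞) * mult (r₁ + r₂) (tmul η₁ η₂) x := by
        rw [hadd]
        exact key_enat n r₁ r₂ hn h3₁ h3₂ _ _ hc₁ hc₂
      have := hy (tmul η₁ η₂) hc
      rw [hadd, mult_zero_of_not_one_le hm₁, mult_zero_of_not_one_le hm₂,
        add_zero] at this
      exact absurd this (by simp)
    · rintro rfl
      intro η hη
      by_contra h0
      rw [mult_zero_of_not_one_le h0, mul_zero, nonpos_iff_eq_zero,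
        Nat.cast_eq_zero, Nat.mul_eq_zero] at hη
      omega
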